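/- Let t ≥ 1 and let V be an invertible t×t L-banded real matrix with diagonal d_1,…,d_t (so d_t ≠ 0). Then V^{−1}·1 = d_t^{−1}·e_t and 1ᵀ·V^{−1} = d_t^{−1}·e_tᵀ, where 1 is the all-ones vector and e_t the t-th standard basis vector; consequently 1ᵀ·V^{−1}·1 = d_t^{−1}. -/

import Mathlib

open Matrix

/-- For an invertible L-banded matrix `V` (with `V_{i,j} = d_{max(i,j)}`),
one has `d_t ≠ 0`, `V⁻¹·1 = d_t⁻¹·e_t`, `1ᵀ·V⁻¹ = d_t⁻¹·e_tᵀ`, and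
`1ᵀ·V⁻¹·1 = d_t⁻¹`. -/
theorem lband_inv_ones (n : ℕ) (d : Fin (n + 1) → ℝ)
    (V : Matrix (Fin (n + 1)) (Fin (n + 1)) ℝ)
    (hV : ∀ i j, V i j = d (max i j))
    (hinv : IsUnit V) :
    d (Fin.last n) ≠ 0 ∧
    V⁻¹ *ᵥ (1 : Fin (n + 1) → ℝ) =
      (d (Fin.last n))⁻¹ • (Pi.single (Fin.last n) 1 : Fin (n + 1) → ℝ) ∧
    (1 : Fin (n + 1) → ℝ) ᵥ* V⁻¹ =
      (d (Fin.last n))⁻¹ • (Pi.single (Fin.last n) 1 : Fin (n + 1) → ℝ) ∧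
    (1 : Fin (n + 1) → ℝ) ⬝ᵥ (V⁻¹ *ᵥ (1 : Fin (n + 1) → ℝ)) = (d (Fin.last n))⁻¹ := by
  set t := Fin.last n
  have hdet : IsUnit V.det := (Matrix.isUnit_iff_isUnit_det V).mp hinv
  have hVinv : V⁻¹ * V = 1 := Matrix.nonsing_inv_mul V hdet
  have hVinv' : V * V⁻¹ = 1 := Matrix.mul_nonsing_inv V hdet
  -- V *ᵥ e_t = d_t • 1
  have key : V *ᵥ (Pi.single t 1 : Fin (n + 1) → ℝ) = d t • (1 : Fin (n + 1) → ℝ) := by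
    funext i
    simp [Matrix.mulVec_single, hV i t, max_eq_right (Fin.le_last i)]
    exact congrArg d (max_eq_right (Fin.le_last i))
  have key' : (Pi.single t 1 : Fin (n + 1) → ℝ) ᵥ* V = d t • (1 : Fin (n + 1) → ℝ) := by
    funext j
    simp [Matrix.single_vecMul, hV t j, max_eq_left (Fin.le_last j)]
    exact congrArg d (max_eq_left (Fin.le_last j))
  have main : (Pi.single t 1 : Fin (n + 1) → ℝ) = d t • (V⁻¹ *ᵥ (1 : Fin (n + 1) → ℝ)) := by
    have h := congrArg (fun v => V⁻¹ *ᵥ v) key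
    simp only [Matrix.mulVec_mulVec, hVinv, Matrix.one_mulVec, Matrix.mulVec_smul] at h
    exact h
  have main' : (Pi.single t 1 : Fin (n + 1) → ℝ) = d t • ((1 : Fin (n + 1) → ℝ) ᵥ* V⁻¹) := by
    have h := congrArg (fun v => v ᵥ* V⁻¹) key'
    simp only [Matrix.vecMul_vecMul, hVinv', Matrix.vecMul_one, Matrix.smul_vecMul] at h
    exact h
  have hd : d t ≠ 0 := by
    intro h
    have := congrFun main t
    simp [h] at this
  have h1 : V⁻¹ *ᵥ (1 : Fin (n + 1) → ℝ) = (d t)⁻¹ • (Pi.single t 1 : Fin (n + 1) → ℝ) := by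
    rw [main, smul_smul, inv_mul_cancel₀ hd, one_smul]
  have h2 : (1 : Fin (n + 1) → ℝ) ᵥ* V⁻¹ = (d t)⁻¹ • (Pi.single t 1 : Fin (n + 1) → ℝ) := by
    rw [main', smul_smul, inv_mul_cancel₀ hd, one_smul]
  refine ⟨hd, h1, h2, ?_⟩
  rw [h1]
  simp [dotProduct, Pi.single_apply]
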